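/- If x is a numeric pregame with birthday g(x) = 2 and y is a finite-born numeric pregame with birthday g(y) = m, then the birthday of their product is g(x·y) = m(m+1). -/

import Mathlib

universe u

namespace SetTheory

/-- Pre-games, as in the older Mathlib (`SetTheory.PGame`, removed from Mathlib since). -/
inductive PGame : Type (u + 1)
  | mk : ∀ α β : Type u, (α → PGame) → (β → PGame) → PGame

namespace PGame

/-- The pair `(x ≤ y, x ⧏ y)`, by the recursive characterization of the older Mathlib. -/
noncomputable def leLf : PGame.{u} → PGame.{u} → Prop × Prop
  | mk _ _ xL xR => fun y => PGame.rec (motive := fun _ => Prop × Prop)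
      (fun γ δ yL yR ihL ihR =>
        ((∀ i, (leLf (xL i) (mk γ δ yL yR)).2) ∧ (∀ j, (ihR j).2),
          (∃ k, (ihL k).1) ∨ (∃ j, (leLf (xR j) (mk γ δ yL yR)).1))) y

noncomputable instance : LE PGame.{u} :=
  ⟨fun x y => (leLf x y).1⟩

noncomputable instance : LT PGame.{u} :=
  ⟨fun x y => x ≤ y ∧ ¬ y ≤ x⟩

def Numeric : PGame → Prop
  | ⟨_, _, L, R⟩ => (∀ i j, L i < R j) ∧ (∀ i, Numeric (L i)) ∧ ∀ j, Numeric (R j)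

def neg : PGame → PGame
  | ⟨l, r, L, R⟩ => ⟨r, l, fun i => neg (R i), fun i => neg (L i)⟩

instance : Neg PGame :=
  ⟨neg⟩

noncomputable instance : Add PGame.{u} :=
  ⟨fun x y => by
    induction x generalizing y with | mk xl xr _ _ IHxl IHxr => _
    induction y with | mk yl yr yL yR IHyl IHyr => _
    have y := mk yl yr yL yR
    refine ⟨xl ⊕ yl, xr ⊕ yr, Sum.rec ?_ ?_, Sum.rec ?_ ?_⟩
    · exact fun i => IHxl i y
    · exact IHyl
    · exact fun i => IHxr i y
    · exact IHyr⟩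

noncomputable instance : Sub PGame :=
  ⟨fun x y => x + -y⟩

noncomputable instance : Mul PGame.{u} :=
  ⟨fun x y => by
    induction x generalizing y with | mk xl xr _ _ IHxl IHxr => _
    induction y with | mk yl yr yL yR IHyl IHyr => _
    have y := mk yl yr yL yR
    refine ⟨(xl × yl) ⊕ (xr × yr), (xl × yr) ⊕ (xr × yl), ?_, ?_⟩ <;> rintro (⟨i, j⟩ | ⟨i, j⟩)
    exacts [IHxl i y + IHyl j - IHxl i (yL j), IHxr i y + IHyr j - IHxr i (yR j),
      IHxl i y + IHyr j - IHxl i (yR j), IHxr i y + IHyl j - IHxr i (yL j)]⟩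

noncomputable def birthday : PGame.{u} → Ordinal.{u}
  | ⟨_, _, xL, xR⟩ =>
    max (Ordinal.lsub.{u, u} fun i => birthday (xL i)) (Ordinal.lsub.{u, u} fun i => birthday (xR i))

end PGame

end SetTheory

namespace SetTheory.PGame

def LeftMoves : PGame.{u} → Type u
  | mk l _ _ _ => l

def RightMoves : PGame.{u} → Type u
  | mk _ r _ _ => r

def moveLeft : (x : PGame.{u}) → x.LeftMoves → PGame.{u}
  | mk _ _ L _ => L

def moveRight : (x : PGame.{u}) → x.RightMoves → PGame.{u}
  | mk _ _ _ R => R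

theorem birthday_def (x : PGame.{u}) : x.birthday = max (Ordinal.lsub.{u, u} fun i => (x.moveLeft i).birthday)
    (Ordinal.lsub.{u, u} fun i => (x.moveRight i).birthday) := by
  cases x
  rw [birthday]
  rfl

theorem lt_birthday_iff {x : PGame.{u}} {o : Ordinal.{u}} : o < x.birthday ↔
    (∃ i, o ≤ (x.moveLeft i).birthday) ∨ ∃ i, o ≤ (x.moveRight i).birthday := by
  rw [birthday_def, lt_max_iff, Ordinal.lt_lsub_iff, Ordinal.lt_lsub_iff]

theorem birthday_moveLeft_lt {x : PGame.{u}} (i : x.LeftMoves) :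
    (x.moveLeft i).birthday < x.birthday := by
  rw [birthday_def x]
  exact lt_max_of_lt_left (Ordinal.lt_lsub _ i)

theorem birthday_moveRight_lt {x : PGame.{u}} (i : x.RightMoves) :
    (x.moveRight i).birthday < x.birthday := by
  rw [birthday_def x]
  exact lt_max_of_lt_right (Ordinal.lt_lsub _ i)

theorem leftMoves_mul : ∀ x y : PGame.{u},
    (x * y).LeftMoves = ((x.LeftMoves × y.LeftMoves) ⊕ (x.RightMoves × y.RightMoves))
  | ⟨_, _, _, _⟩, ⟨_, _, _, _⟩ => rfl

theorem rightMoves_mul : ∀ x y : PGame.{u},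
    (x * y).RightMoves = ((x.LeftMoves × y.RightMoves) ⊕ (x.RightMoves × y.LeftMoves))
  | ⟨_, _, _, _⟩, ⟨_, _, _, _⟩ => rfl

noncomputable def toLeftMovesMul {x y : PGame.{u}} :
    ((x.LeftMoves × y.LeftMoves) ⊕ (x.RightMoves × y.RightMoves)) ≃ (x * y).LeftMoves :=
  Equiv.cast (leftMoves_mul x y).symm

noncomputable def toRightMovesMul {x y : PGame.{u}} :
    ((x.LeftMoves × y.RightMoves) ⊕ (x.RightMoves × y.LeftMoves)) ≃ (x * y).RightMoves :=
  Equiv.cast (rightMoves_mul x y).symm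

theorem mul_moveLeft_inl {x y : PGame.{u}} {i j} :
    (x * y).moveLeft (toLeftMovesMul (Sum.inl (i, j))) =
      x.moveLeft i * y + x * y.moveLeft j - x.moveLeft i * y.moveLeft j := by
  cases x; cases y; rfl

theorem mul_moveLeft_inr {x y : PGame.{u}} {i j} :
    (x * y).moveLeft (toLeftMovesMul (Sum.inr (i, j))) =
      x.moveRight i * y + x * y.moveRight j - x.moveRight i * y.moveRight j := by
  cases x; cases y; rfl

theorem mul_moveRight_inl {x y : PGame.{u}} {i j} :
    (x * y).moveRight (toRightMovesMul (Sum.inl (i, j))) =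
      x.moveLeft i * y + x * y.moveRight j - x.moveLeft i * y.moveRight j := by
  cases x; cases y; rfl

theorem mul_moveRight_inr {x y : PGame.{u}} {i j} :
    (x * y).moveRight (toRightMovesMul (Sum.inr (i, j))) =
      x.moveRight i * y + x * y.moveLeft j - x.moveRight i * y.moveLeft j := by
  cases x; cases y; rfl

theorem leftMoves_mul_cases {x y : PGame.{u}} (k) {P : (x * y).LeftMoves → Prop}
    (hl : ∀ ix iy, P (toLeftMovesMul (Sum.inl (ix, iy))))
    (hr : ∀ jx jy, P (toLeftMovesMul (Sum.inr (jx, jy)))) : P k := by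
  rw [← toLeftMovesMul.apply_symm_apply k]
  rcases toLeftMovesMul.symm k with (⟨ix, iy⟩ | ⟨jx, jy⟩)
  exacts [hl _ _, hr _ _]

theorem rightMoves_mul_cases {x y : PGame.{u}} (k) {P : (x * y).RightMoves → Prop}
    (hl : ∀ ix jy, P (toRightMovesMul (Sum.inl (ix, jy))))
    (hr : ∀ jx iy, P (toRightMovesMul (Sum.inr (jx, iy)))) : P k := by
  rw [← toRightMovesMul.apply_symm_apply k]
  rcases toRightMovesMul.symm k with (⟨ix, iy⟩ | ⟨jx, jy⟩)
  exacts [hl _ _, hr _ _]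

theorem birthday_neg (x : PGame.{u}) : (-x).birthday = x.birthday := by
  induction x with
  | mk xl xr xL xR ihL ihR =>
  show (mk xr xl (fun i => -(xR i)) (fun i => -(xL i))).birthday = _
  rw [birthday, birthday, max_comm]
  simp only [ihL, ihR]

theorem exists_opt {x : PGame.{u}} {k : ℕ}
    (h : x.birthday = ((k + 1 : ℕ) : Ordinal)) :
    (∃ i, (x.moveLeft i).birthday = (k : Ordinal)) ∨
      ∃ j, (x.moveRight j).birthday = (k : Ordinal) := by
  have hk : (k : Ordinal) < x.birthday := by
    rw [h]; exact_mod_cast Nat.lt_succ_self k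
  have hlt : ∀ o : Ordinal, o < x.birthday → o ≤ (k : Ordinal) := by
    intro o ho
    rw [h] at ho
    rwa [Nat.cast_add, Nat.cast_one, Ordinal.add_one_eq_succ, Order.lt_succ_iff] at ho
  rcases lt_birthday_iff.1 hk with ⟨i, hi⟩ | ⟨j, hj⟩
  · exact Or.inl ⟨i, le_antisymm (hlt _ (birthday_moveLeft_lt i)) hi⟩
  · exact Or.inr ⟨j, le_antisymm (hlt _ (birthday_moveRight_lt j)) hj⟩

theorem succ_finish {a : Ordinal.{u}} {n : ℕ} (h : ((n : ℕ) : Ordinal) < a) (m : ℕ)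
    (hm : m = n + 1) : (m : Ordinal) ≤ a := by
  subst hm
  rw [Nat.cast_succ, Ordinal.add_one_eq_succ]
  exact Order.succ_le_of_lt h

theorem birthday_add_nat (x y : PGame.{u}) : ∀ p q : ℕ, x.birthday = p → y.birthday = q →
    (x + y).birthday = ((p + q : ℕ) : Ordinal) := by
  induction x generalizing y with
  | mk xl xr xL xR ihxL ihxR =>
  induction y with
  | mk yl yr yL yR ihyL ihyR =>
  intro p q hx hy
  have hL1 : ∀ i, (xL i + mk yl yr yL yR).birthday <
      (mk xl xr xL xR + mk yl yr yL yR).birthday :=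
    fun i => birthday_moveLeft_lt (x := mk xl xr xL xR + mk yl yr yL yR) (Sum.inl i)
  have hL2 : ∀ j, (mk xl xr xL xR + yL j).birthday <
      (mk xl xr xL xR + mk yl yr yL yR).birthday :=
    fun j => birthday_moveLeft_lt (x := mk xl xr xL xR + mk yl yr yL yR) (Sum.inr j)
  have hR1 : ∀ i, (xR i + mk yl yr yL yR).birthday <
      (mk xl xr xL xR + mk yl yr yL yR).birthday :=
    fun i => birthday_moveRight_lt (x := mk xl xr xL xR + mk yl yr yL yR) (Sum.inl i)
  have hR2 : ∀ j, (mk xl xr xL xR + yR j).birthday <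
      (mk xl xr xL xR + mk yl yr yL yR).birthday :=
    fun j => birthday_moveRight_lt (x := mk xl xr xL xR + mk yl yr yL yR) (Sum.inr j)
  have ex : ∀ a : PGame.{u}, a.birthday < (mk xl xr xL xR).birthday →
      ∃ p' : ℕ, p' < p ∧ a.birthday = p' := by
    intro a ha
    rw [hx] at ha
    obtain ⟨p', hp'⟩ := Ordinal.lt_omega0.1 (ha.trans (Ordinal.natCast_lt_omega0 p))
    exact ⟨p', by rw [hp'] at ha; exact_mod_cast ha, hp'⟩
  have ey : ∀ b : PGame.{u}, b.birthday < (mk yl yr yL yR).birthday →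
      ∃ q' : ℕ, q' < q ∧ b.birthday = q' := by
    intro b hb
    rw [hy] at hb
    obtain ⟨q', hq'⟩ := Ordinal.lt_omega0.1 (hb.trans (Ordinal.natCast_lt_omega0 q))
    exact ⟨q', by rw [hq'] at hb; exact_mod_cast hb, hq'⟩
  apply le_antisymm
  · rw [birthday_def]
    refine max_le (Ordinal.lsub_le ?_) (Ordinal.lsub_le ?_)
    · rintro (i | j)
      · obtain ⟨p', hp, e⟩ := ex _ (birthday_moveLeft_lt (x := mk xl xr xL xR) i)
        show (xL i + mk yl yr yL yR).birthday < _
        rw [ihxL i _ p' q e hy]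
        exact_mod_cast (by omega : p' + q < p + q)
      · obtain ⟨q', hq, e⟩ := ey _ (birthday_moveLeft_lt (x := mk yl yr yL yR) j)
        show (mk xl xr xL xR + yL j).birthday < _
        rw [ihyL j p q' hx e]
        exact_mod_cast (by omega : p + q' < p + q)
    · rintro (i | j)
      · obtain ⟨p', hp, e⟩ := ex _ (birthday_moveRight_lt (x := mk xl xr xL xR) i)
        show (xR i + mk yl yr yL yR).birthday < _
        rw [ihxR i _ p' q e hy]
        exact_mod_cast (by omega : p' + q < p + q)
      · obtain ⟨q', hq, e⟩ := ey _ (birthday_moveRight_lt (x := mk yl yr yL yR) j)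
        show (mk xl xr xL xR + yR j).birthday < _
        rw [ihyR j p q' hx e]
        exact_mod_cast (by omega : p + q' < p + q)
  · rcases p with _ | p'
    · rcases q with _ | q'
      · simp
      · rcases exists_opt hy with ⟨j, hj⟩ | ⟨j, hj⟩
        · have h := hL2 j
          rw [ihyL j _ q' hx hj] at h
          exact succ_finish h _ (by omega)
        · have h := hR2 j
          rw [ihyR j _ q' hx hj] at h
          exact succ_finish h _ (by omega)
    · rcases exists_opt hx with ⟨i, hi⟩ | ⟨i, hi⟩
      · have h := hL1 i
        rw [ihxL i _ p' q hi hy] at h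
        exact succ_finish h _ (by omega)
      · have h := hR1 i
        rw [ihxR i _ p' q hi hy] at h
        exact succ_finish h _ (by omega)

end SetTheory.PGame

open SetTheory PGame Ordinal

private def F : ℕ → ℕ → ℕ
  | 0, _ => 0
  | _ + 1, 0 => 0
  | n + 1, m + 1 => F n (m + 1) + F (n + 1) m + F n m + 1

private lemma F_zero_left (m : ℕ) : F 0 m = 0 := by simp [F]

private lemma F_zero_right : ∀ n, F n 0 = 0
  | 0 => by simp [F]
  | _ + 1 => by simp [F]

private lemma F_succ_succ (n m : ℕ) :
    F (n + 1) (m + 1) = F n (m + 1) + F (n + 1) m + F n m + 1 := by simp [F]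

private lemma F_le_succ_left (n m : ℕ) : F n m ≤ F (n + 1) m := by
  cases m with
  | zero => simp [F_zero_right]
  | succ m => rw [F_succ_succ n m]; omega

private lemma F_le_succ_right (n m : ℕ) : F n m ≤ F n (m + 1) := by
  cases n with
  | zero => simp [F_zero_left]
  | succ n => rw [F_succ_succ n m]; omega

private lemma F_mono_left {i n : ℕ} (h : i ≤ n) (m : ℕ) : F i m ≤ F n m := by
  induction h with
  | refl => exact le_rfl
  | step _ ih => exact ih.trans (F_le_succ_left _ _)

private lemma F_mono_right {j m : ℕ} (h : j ≤ m) (n : ℕ) : F n j ≤ F n m := by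
  induction h with
  | refl => exact le_rfl
  | step _ ih => exact ih.trans (F_le_succ_right _ _)

private lemma F_key {p n q m : ℕ} (hp : p < n) (hq : q < m) :
    F p m + F n q + F p q < F n m := by
  obtain ⟨n', rfl⟩ : ∃ n', n = n' + 1 := ⟨n - 1, by omega⟩
  obtain ⟨m', rfl⟩ : ∃ m', m = m' + 1 := ⟨m - 1, by omega⟩
  have h1 : F p (m' + 1) ≤ F n' (m' + 1) := F_mono_left (by omega) _
  have h2 : F (n' + 1) q ≤ F (n' + 1) m' := F_mono_right (by omega) _
  have h3 : F p q ≤ F n' m' :=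
    (F_mono_left (show p ≤ n' by omega) q).trans (F_mono_right (by omega) n')
  rw [F_succ_succ n' m']
  omega

private lemma F_one : ∀ k, F 1 k = k
  | 0 => F_zero_right 1
  | k + 1 => by rw [F_succ_succ 0 k, F_zero_left, F_zero_left, F_one k]; omega

private lemma F_two : ∀ m, F 2 m = m * (m + 1)
  | 0 => F_zero_right 2
  | m + 1 => by rw [F_succ_succ 1 m, F_one, F_one, F_two m]; ring

private lemma aux_birthday {a b c : PGame} {p q r : ℕ}
    (ha : a.birthday = p) (hb : b.birthday = q) (hc : c.birthday = r) :
    (a + b - c).birthday = ((p + q + r : ℕ) : Ordinal) := by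
  rw [show a + b - c = a + b + -c from rfl,
    birthday_add_nat _ _ (p + q) r (birthday_add_nat _ _ p q ha hb) (by rw [birthday_neg, hc])]

private lemma exists_option_of_birthday_succ {x : PGame} {k : ℕ}
    (h : x.birthday = ((k + 1 : ℕ) : Ordinal)) :
    (∃ i, (x.moveLeft i).birthday = (k : Ordinal)) ∨
      ∃ j, (x.moveRight j).birthday = (k : Ordinal) := by
  have hk : (k : Ordinal) < x.birthday := by
    rw [h]; exact_mod_cast Nat.lt_succ_self k
  have hlt : ∀ o : Ordinal, o < x.birthday → o ≤ (k : Ordinal) := by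
    intro o ho
    rw [h] at ho
    rwa [Nat.cast_add, Nat.cast_one, Ordinal.add_one_eq_succ, Order.lt_succ_iff] at ho
  rcases lt_birthday_iff.1 hk with ⟨i, hi⟩ | ⟨j, hj⟩
  · exact Or.inl ⟨i, le_antisymm (hlt _ (birthday_moveLeft_lt i)) hi⟩
  · exact Or.inr ⟨j, le_antisymm (hlt _ (birthday_moveRight_lt j)) hj⟩

private lemma birthday_mul_eq (N : ℕ) :
    ∀ (x y : PGame) (n m : ℕ), n + m ≤ N → x.birthday = n → y.birthday = m →
      (x * y).birthday = ((F n m : ℕ) : Ordinal) := by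
  induction N using Nat.strong_induction_on with
  | _ N IH =>
  intro x y n m hN hx hy
  have key : ∀ a b : PGame, a.birthday < x.birthday → b.birthday < y.birthday →
      (a * y + x * b - a * b).birthday < ((F n m : ℕ) : Ordinal) := by
    intro a b ha hb
    rw [hx] at ha
    rw [hy] at hb
    obtain ⟨p, hp⟩ := Ordinal.lt_omega0.1 (ha.trans (Ordinal.natCast_lt_omega0 n))
    obtain ⟨q, hq⟩ := Ordinal.lt_omega0.1 (hb.trans (Ordinal.natCast_lt_omega0 m))
    rw [hp] at ha
    rw [hq] at hb
    have hpn : p < n := by exact_mod_cast ha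
    have hqm : q < m := by exact_mod_cast hb
    have e1 : (a * y).birthday = ((F p m : ℕ) : Ordinal) :=
      IH (p + m) (by omega) a y p m le_rfl hp hy
    have e2 : (x * b).birthday = ((F n q : ℕ) : Ordinal) :=
      IH (n + q) (by omega) x b n q le_rfl hx hq
    have e3 : (a * b).birthday = ((F p q : ℕ) : Ordinal) :=
      IH (p + q) (by omega) a b p q le_rfl hp hq
    rw [aux_birthday e1 e2 e3]
    exact_mod_cast F_key hpn hqm
  refine le_antisymm ?_ ?_
  · rw [birthday_def]
    refine max_le (Ordinal.lsub_le fun k => ?_) (Ordinal.lsub_le fun k => ?_)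
    · apply leftMoves_mul_cases k <;> intro i j
      · rw [mul_moveLeft_inl]
        exact key _ _ (birthday_moveLeft_lt i) (birthday_moveLeft_lt j)
      · rw [mul_moveLeft_inr]
        exact key _ _ (birthday_moveRight_lt i) (birthday_moveRight_lt j)
    · apply rightMoves_mul_cases k <;> intro i j
      · rw [mul_moveRight_inl]
        exact key _ _ (birthday_moveLeft_lt i) (birthday_moveRight_lt j)
      · rw [mul_moveRight_inr]
        exact key _ _ (birthday_moveRight_lt i) (birthday_moveLeft_lt j)
  · rcases n with _ | n'
    · simp [F_zero_left]
    rcases m with _ | m'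
    · simp [F_zero_right]
    have hxo := exists_option_of_birthday_succ hx
    have hyo := exists_option_of_birthday_succ hy
    have main : ((F n' (m' + 1) + F (n' + 1) m' + F n' m' : ℕ) : Ordinal) <
        (x * y).birthday := by
      rcases hxo with ⟨i, hi⟩ | ⟨i, hi⟩ <;> rcases hyo with ⟨j, hj⟩ | ⟨j, hj⟩
      · have e1 : (x.moveLeft i * y).birthday = ((F n' (m' + 1) : ℕ) : Ordinal) :=
          IH (n' + (m' + 1)) (by omega) _ y n' (m' + 1) le_rfl hi hy
        have e2 : (x * y.moveLeft j).birthday = ((F (n' + 1) m' : ℕ) : Ordinal) :=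
          IH ((n' + 1) + m') (by omega) x _ (n' + 1) m' le_rfl hx hj
        have e3 : (x.moveLeft i * y.moveLeft j).birthday = ((F n' m' : ℕ) : Ordinal) :=
          IH (n' + m') (by omega) _ _ n' m' le_rfl hi hj
        have hlt := birthday_moveLeft_lt (toLeftMovesMul (Sum.inl (i, j)))
        rwa [mul_moveLeft_inl, aux_birthday e1 e2 e3] at hlt
      · have e1 : (x.moveLeft i * y).birthday = ((F n' (m' + 1) : ℕ) : Ordinal) :=
          IH (n' + (m' + 1)) (by omega) _ y n' (m' + 1) le_rfl hi hy
        have e2 : (x * y.moveRight j).birthday = ((F (n' + 1) m' : ℕ) : Ordinal) :=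
          IH ((n' + 1) + m') (by omega) x _ (n' + 1) m' le_rfl hx hj
        have e3 : (x.moveLeft i * y.moveRight j).birthday = ((F n' m' : ℕ) : Ordinal) :=
          IH (n' + m') (by omega) _ _ n' m' le_rfl hi hj
        have hlt := birthday_moveRight_lt (toRightMovesMul (Sum.inl (i, j)))
        rwa [mul_moveRight_inl, aux_birthday e1 e2 e3] at hlt
      · have e1 : (x.moveRight i * y).birthday = ((F n' (m' + 1) : ℕ) : Ordinal) :=
          IH (n' + (m' + 1)) (by omega) _ y n' (m' + 1) le_rfl hi hy
        have e2 : (x * y.moveLeft j).birthday = ((F (n' + 1) m' : ℕ) : Ordinal) :=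
          IH ((n' + 1) + m') (by omega) x _ (n' + 1) m' le_rfl hx hj
        have e3 : (x.moveRight i * y.moveLeft j).birthday = ((F n' m' : ℕ) : Ordinal) :=
          IH (n' + m') (by omega) _ _ n' m' le_rfl hi hj
        have hlt := birthday_moveRight_lt (toRightMovesMul (Sum.inr (i, j)))
        rwa [mul_moveRight_inr, aux_birthday e1 e2 e3] at hlt
      · have e1 : (x.moveRight i * y).birthday = ((F n' (m' + 1) : ℕ) : Ordinal) :=
          IH (n' + (m' + 1)) (by omega) _ y n' (m' + 1) le_rfl hi hy
        have e2 : (x * y.moveRight j).birthday = ((F (n' + 1) m' : ℕ) : Ordinal) :=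
          IH ((n' + 1) + m') (by omega) x _ (n' + 1) m' le_rfl hx hj
        have e3 : (x.moveRight i * y.moveRight j).birthday = ((F n' m' : ℕ) : Ordinal) :=
          IH (n' + m') (by omega) _ _ n' m' le_rfl hi hj
        have hlt := birthday_moveLeft_lt (toLeftMovesMul (Sum.inr (i, j)))
        rwa [mul_moveLeft_inr, aux_birthday e1 e2 e3] at hlt
    rw [F_succ_succ, Nat.cast_add, Nat.cast_one, Ordinal.add_one_eq_succ, Order.succ_le_iff]
    exact main

theorem birthday_mul_of_birthday_two (x y : PGame) (hx : x.Numeric) (hy : y.Numeric)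
    (hx2 : x.birthday = 2) (m : ℕ) (hym : y.birthday = (m : Ordinal)) :
    (x * y).birthday = ((m * (m + 1) : ℕ) : Ordinal) := by
  have h := birthday_mul_eq (2 + m) x y 2 m le_rfl (by rw [hx2]; norm_cast) hym
  rw [h, F_two]
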